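/- For every nonzero element W of the order 𝒪, |det(W)| ≥ 1, and consequently ‖W‖_F² ≥ 2. -/

import Mathlib

open Matrix

/-- The golden number θ = (1+√5)/2, as a complex number. -/
noncomputable def gold : ℂ := (1 + Real.sqrt 5) / 2

/-- Squared Frobenius norm of a 2×2 complex matrix. -/
noncomputable def fro2 (M : Matrix (Fin 2) (Fin 2) ℂ) : ℝ :=
  ∑ i, ∑ j, ‖M i j‖ ^ 2

/-- The element `a + bθ + i(c + dθ)` of `ℤ[i,θ]`. -/
noncomputable def zit (a b c d : ℤ) : ℂ :=
  (a : ℂ) + b * gold + Complex.I * ((c : ℂ) + d * gold)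

/-- Its conjugate under `θ ↦ 1 − θ`. -/
noncomputable def zitBar (a b c d : ℤ) : ℂ :=
  (a : ℂ) + b * (1 - gold) + Complex.I * ((c : ℂ) + d * (1 - gold))

/-- The matrix `[[w₁, w₂], [i·w̄₂, w̄₁]]` of the order `𝒪`, with
`w₁ = a + bθ + i(c+dθ)` and `w₂ = e + fθ + i(g+hθ)`. -/
noncomputable def Omat (a b c d e f g h : ℤ) : Matrix (Fin 2) (Fin 2) ℂ :=
  !![zit a b c d, zit e f g h;
     Complex.I * zitBar e f g h, zitBar a b c d]

/-- Membership in the order `𝒪`. -/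
def inO (W : Matrix (Fin 2) (Fin 2) ℂ) : Prop :=
  ∃ a b c d e f g h : ℤ, W = Omat a b c d e f g h

/-- `α = 1 + i·θ̄ = 1 + i(1−θ)`. -/
noncomputable def alphaG : ℂ := 1 + Complex.I * (1 - gold)

/-- `ᾱ = 1 + i·θ`. -/
noncomputable def alphaBarG : ℂ := 1 + Complex.I * gold

/-- `A = diag(α, ᾱ)`. -/
noncomputable def Amat : Matrix (Fin 2) (Fin 2) ℂ := !![alphaG, 0; 0, alphaBarG]

/-- Membership in the Golden Code `𝒢 = (1/√5)·A·𝒪`. -/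
def inG (X : Matrix (Fin 2) (Fin 2) ℂ) : Prop :=
  ∃ W, inO W ∧ X = ((Real.sqrt 5 : ℂ))⁻¹ • (Amat * W)

/-! ### Auxiliary material -/

/-- Real part of `det` over ℤ. -/
def Pe (a b c d e f g h : ℤ) : ℤ :=
  (a^2+a*b-b^2) - (c^2+c*d-d^2) + (2*e*g+e*h+f*g-2*f*h)

/-- Imaginary part of `det` over ℤ. -/
def Qe (a b c d e f g h : ℤ) : ℤ :=
  (2*a*c+a*d+b*c-2*b*d) - (e^2+e*f-f^2) + (g^2+g*h-h^2)

lemma sq3 : ∀ x y : ZMod 5, x^2 = 3*y^2 → x = 0 ∧ y = 0 := by decide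

lemma sq2 : ∀ x y : ZMod 5, x^2 = 2*y^2 → x = 0 ∧ y = 0 := by decide

lemma goldC_sq : gold ^ 2 = gold + 1 := by
  have h5 : Real.sqrt 5 ^ 2 = 5 := Real.sq_sqrt (by norm_num)
  have h5c : ((Real.sqrt 5 : ℝ) : ℂ) ^ 2 = 5 := by exact_mod_cast congrArg Complex.ofReal h5
  unfold gold
  linear_combination (1/4 : ℂ) * h5c

lemma zmul (a b c d : ℤ) :
    zit a b c d * zitBar a b c d =
      ((a^2+a*b-b^2 - (c^2+c*d-d^2) : ℤ) : ℂ) + ((2*a*c+a*d+b*c-2*b*d : ℤ) : ℂ) * Complex.I := by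
  unfold zit zitBar
  push_cast
  linear_combination ((d:ℂ)^2-(b:ℂ)^2-2*(b:ℂ)*(d:ℂ)*Complex.I) * goldC_sq
    + (((c:ℂ)+(d:ℂ)*gold)*((c:ℂ)+(d:ℂ)*(1-gold))) * Complex.I_sq

lemma detOmat (a b c d e f g h : ℤ) :
    (Omat a b c d e f g h).det =
      ((Pe a b c d e f g h : ℤ) : ℂ) + ((Qe a b c d e f g h : ℤ) : ℂ) * Complex.I := by
  have h1 := zmul a b c d
  have h2 := zmul e f g h
  rw [Omat, Matrix.det_fin_two_of]
  simp only [Pe, Qe]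
  push_cast at h1 h2 ⊢
  linear_combination h1 - Complex.I * h2 - (2*(e:ℂ)*g+(e:ℂ)*h+(f:ℂ)*g-2*(f:ℂ)*h) * Complex.I_sq

lemma Omat_zero : Omat 0 0 0 0 0 0 0 0 = 0 := by
  ext i j
  fin_cases i <;> fin_cases j <;> simp [Omat, zit, zitBar]

lemma mod5 (a b c d e f g h : ℤ) (hP : Pe a b c d e f g h = 0)
    (hQ : Qe a b c d e f g h = 0) :
    (5:ℤ) ∣ (-a+2*b) ∧ (5:ℤ) ∣ (2*a+b) ∧ (5:ℤ) ∣ (-c+2*d) ∧ (5:ℤ) ∣ (2*c+d) ∧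
    (5:ℤ) ∣ (-e+2*f) ∧ (5:ℤ) ∣ (2*e+f) ∧ (5:ℤ) ∣ (-g+2*h) ∧ (5:ℤ) ∣ (2*g+h) := by
  have h5 : (5 : ZMod 5) = 0 := by decide
  simp only [Pe] at hP
  simp only [Qe] at hQ
  have hP5 := congrArg (fun n : ℤ => (n : ZMod 5)) hP
  have hQ5 := congrArg (fun n : ℤ => (n : ZMod 5)) hQ
  push_cast at hP5 hQ5
  have ht : ((a:ZMod 5)+3*b+3*c+4*d)^2 = 3*((e:ZMod 5)+3*f+3*g+4*h)^2 := by
    linear_combination hP5 + 3*hQ5 +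
      ((a:ZMod 5)*b + (a:ZMod 5)*d + 2*(b:ZMod 5)^2 + 3*(b:ZMod 5)*c + 6*(b:ZMod 5)*d
        + 2*(c:ZMod 5)^2 + 5*(c:ZMod 5)*d + 3*(d:ZMod 5)^2 - 3*(e:ZMod 5)*f - 4*(e:ZMod 5)*g
        - 5*(e:ZMod 5)*h - 6*(f:ZMod 5)^2 - 11*(f:ZMod 5)*g - 14*(f:ZMod 5)*h
        - 6*(g:ZMod 5)^2 - 15*(g:ZMod 5)*h - 9*(h:ZMod 5)^2) * h5
  have htb : ((a:ZMod 5)+3*b+2*c+d)^2 = 2*((e:ZMod 5)+3*f+2*g+h)^2 := by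
    linear_combination hP5 + 2*hQ5 +
      ((a:ZMod 5)*b + 2*(b:ZMod 5)^2 + 2*(b:ZMod 5)*c + 2*(b:ZMod 5)*d + (c:ZMod 5)^2
        + (c:ZMod 5)*d - 2*(e:ZMod 5)*f - 2*(e:ZMod 5)*g - (e:ZMod 5)*h - 4*(f:ZMod 5)^2
        - 5*(f:ZMod 5)*g - 2*(f:ZMod 5)*h - 2*(g:ZMod 5)^2 - 2*(g:ZMod 5)*h) * h5
  obtain ⟨ht0, hs0⟩ := sq3 _ _ ht
  obtain ⟨htb0, hsb0⟩ := sq2 _ _ htb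
  have hC : (c:ZMod 5) - 2*d = 0 := by linear_combination ht0 - htb0 - (d:ZMod 5)*h5
  have hA : (a:ZMod 5) - 2*b = 0 := by linear_combination htb0 - 2*hC - ((b:ZMod 5)+(d:ZMod 5))*h5
  have hG : (g:ZMod 5) - 2*h = 0 := by linear_combination hs0 - hsb0 - (h:ZMod 5)*h5
  have hE : (e:ZMod 5) - 2*f = 0 := by linear_combination hsb0 - 2*hG - ((f:ZMod 5)+(h:ZMod 5))*h5
  refine ⟨?_, ?_, ?_, ?_, ?_, ?_, ?_, ?_⟩ <;>
    apply (ZMod.intCast_zmod_eq_zero_iff_dvd _ 5).mp <;> push_cast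
  · linear_combination -hA
  · linear_combination 2*hA + (b:ZMod 5)*h5
  · linear_combination -hC
  · linear_combination 2*hC + (d:ZMod 5)*h5
  · linear_combination -hE
  · linear_combination 2*hE + (f:ZMod 5)*h5
  · linear_combination -hG
  · linear_combination 2*hG + (h:ZMod 5)*h5

lemma sum_sq_zero {a b c d e f g h : ℤ}
    (hS : a^2+b^2+c^2+d^2+e^2+f^2+g^2+h^2 ≤ 0) :
    a = 0 ∧ b = 0 ∧ c = 0 ∧ d = 0 ∧ e = 0 ∧ f = 0 ∧ g = 0 ∧ h = 0 := by
  refine ⟨?_, ?_, ?_, ?_, ?_, ?_, ?_, ?_⟩ <;>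
  · rw [← sq_eq_zero_iff]
    apply le_antisymm ?_ (sq_nonneg _)
    nlinarith [sq_nonneg a, sq_nonneg b, sq_nonneg c, sq_nonneg d,
      sq_nonneg e, sq_nonneg f, sq_nonneg g, sq_nonneg h]

lemma key : ∀ n : ℕ, ∀ a b c d e f g h : ℤ,
    a^2+b^2+c^2+d^2+e^2+f^2+g^2+h^2 ≤ (n : ℤ) →
    Pe a b c d e f g h = 0 → Qe a b c d e f g h = 0 →
    a = 0 ∧ b = 0 ∧ c = 0 ∧ d = 0 ∧ e = 0 ∧ f = 0 ∧ g = 0 ∧ h = 0 := by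
  intro n
  induction n with
  | zero =>
    intro a b c d e f g h hS hP hQ
    exact sum_sq_zero (by exact_mod_cast hS)
  | succ n ih =>
    intro a b c d e f g h hS hP hQ
    obtain ⟨hd1, hd2, hd3, hd4, hd5, hd6, hd7, hd8⟩ := mod5 a b c d e f g h hP hQ
    obtain ⟨a', ha⟩ := hd1
    obtain ⟨b', hb⟩ := hd2
    obtain ⟨c', hc⟩ := hd3
    obtain ⟨d', hd⟩ := hd4
    obtain ⟨e', he⟩ := hd5
    obtain ⟨f', hf⟩ := hd6
    obtain ⟨g', hg⟩ := hd7
    obtain ⟨h', hh⟩ := hd8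
    have ea : a = -a' + 2*b' := by omega
    have eb : b = 2*a' + b' := by omega
    have ec : c = -c' + 2*d' := by omega
    have ed : d = 2*c' + d' := by omega
    have ee : e = -e' + 2*f' := by omega
    have ef : f = 2*e' + f' := by omega
    have eg : g = -g' + 2*h' := by omega
    have eh : h = 2*g' + h' := by omega
    subst ea eb ec ed ee ef eg eh
    by_cases h0 : (-a' + 2*b')^2+(2*a' + b')^2+(-c' + 2*d')^2+(2*c' + d')^2
        +(-e' + 2*f')^2+(2*e' + f')^2+(-g' + 2*h')^2+(2*g' + h')^2 = 0
    · exact sum_sq_zero (le_of_eq h0)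
    · have hP' : Pe a' b' c' d' e' f' g' h' = 0 := by
        have hid : (-5:ℤ) * Pe a' b' c' d' e' f' g' h' =
            Pe (-a' + 2*b') (2*a' + b') (-c' + 2*d') (2*c' + d')
              (-e' + 2*f') (2*e' + f') (-g' + 2*h') (2*g' + h') := by
          simp only [Pe]; ring
        rw [hP] at hid
        linarith
      have hQ' : Qe a' b' c' d' e' f' g' h' = 0 := by
        have hid : (-5:ℤ) * Qe a' b' c' d' e' f' g' h' =
            Qe (-a' + 2*b') (2*a' + b') (-c' + 2*d') (2*c' + d')
              (-e' + 2*f') (2*e' + f') (-g' + 2*h') (2*g' + h') := by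
          simp only [Qe]; ring
        rw [hQ] at hid
        linarith
      have hsum : (-a' + 2*b')^2+(2*a' + b')^2+(-c' + 2*d')^2+(2*c' + d')^2
          +(-e' + 2*f')^2+(2*e' + f')^2+(-g' + 2*h')^2+(2*g' + h')^2
          = 5 * (a'^2+b'^2+c'^2+d'^2+e'^2+f'^2+g'^2+h'^2) := by ring
      have hXnn : (0:ℤ) ≤ a'^2+b'^2+c'^2+d'^2+e'^2+f'^2+g'^2+h'^2 := by positivity
      have hXpos : (0:ℤ) < a'^2+b'^2+c'^2+d'^2+e'^2+f'^2+g'^2+h'^2 := by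
        rcases lt_or_eq_of_le hXnn with h' | h'
        · exact h'
        · exfalso; apply h0; rw [hsum, ← h', mul_zero]
      have hX1 : (1:ℤ) ≤ a'^2+b'^2+c'^2+d'^2+e'^2+f'^2+g'^2+h'^2 := hXpos
      have hS' : a'^2+b'^2+c'^2+d'^2+e'^2+f'^2+g'^2+h'^2 ≤ (n : ℤ) := by
        rw [hsum] at hS
        push_cast at hS ⊢
        linarith
      obtain ⟨z1, z2, z3, z4, z5, z6, z7, z8⟩ := ih a' b' c' d' e' f' g' h' hS' hP' hQ'
      subst z1 z2 z3 z4 z5 z6 z7 z8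
      norm_num

lemma fro_ge (M : Matrix (Fin 2) (Fin 2) ℂ) : 2 * ‖M.det‖ ≤ fro2 M := by
  rw [Matrix.det_fin_two]
  have h1 : ‖M 0 0 * M 1 1 - M 0 1 * M 1 0‖ ≤
      ‖M 0 0‖ * ‖M 1 1‖ + ‖M 0 1‖ * ‖M 1 0‖ := by
    calc ‖M 0 0 * M 1 1 - M 0 1 * M 1 0‖
        ≤ ‖M 0 0 * M 1 1‖ + ‖M 0 1 * M 1 0‖ :=
          norm_sub_le _ _
      _ = ‖M 0 0‖ * ‖M 1 1‖
          + ‖M 0 1‖ * ‖M 1 0‖ := by rw [norm_mul, norm_mul]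
  have h2 : fro2 M = ‖M 0 0‖ ^ 2 + ‖M 0 1‖ ^ 2
      + ‖M 1 0‖ ^ 2 + ‖M 1 1‖ ^ 2 := by
    simp [fro2, Fin.sum_univ_two]; ring
  rw [h2]
  nlinarith [sq_nonneg (‖M 0 0‖ - ‖M 1 1‖),
    sq_nonneg (‖M 0 1‖ - ‖M 1 0‖), h1]

/-- Every nonzero element `W` of the order `𝒪` satisfies `|det W| ≥ 1`, and
consequently `‖W‖_F² ≥ 2`. -/
theorem det_O_ge_one (W : Matrix (Fin 2) (Fin 2) ℂ) (hW : inO W) (h0 : W ≠ 0) :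
    1 ≤ ‖W.det‖ ∧ 2 ≤ fro2 W := by
  obtain ⟨a, b, c, d, e, f, g, h, rfl⟩ := hW
  have hnz : ¬(a = 0 ∧ b = 0 ∧ c = 0 ∧ d = 0 ∧ e = 0 ∧ f = 0 ∧ g = 0 ∧ h = 0) := by
    rintro ⟨rfl, rfl, rfl, rfl, rfl, rfl, rfl, rfl⟩
    exact h0 Omat_zero
  have hPQ : Pe a b c d e f g h ≠ 0 ∨ Qe a b c d e f g h ≠ 0 := by
    by_contra hcon
    push_neg at hcon
    exact hnz (key (a^2+b^2+c^2+d^2+e^2+f^2+g^2+h^2).toNat a b c d e f g h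
      (Int.self_le_toNat _) hcon.1 hcon.2)
  have hge : (1:ℤ) ≤ Pe a b c d e f g h ^ 2 + Qe a b c d e f g h ^ 2 := by
    rcases hPQ with h' | h'
    · nlinarith [Int.one_le_abs h', sq_abs (Pe a b c d e f g h),
        sq_nonneg (Qe a b c d e f g h), abs_nonneg (Pe a b c d e f g h)]
    · nlinarith [Int.one_le_abs h', sq_abs (Qe a b c d e f g h),
        sq_nonneg (Pe a b c d e f g h), abs_nonneg (Qe a b c d e f g h)]
  have hns : Complex.normSq ((Omat a b c d e f g h).det)
      = (Pe a b c d e f g h : ℝ)^2 + (Qe a b c d e f g h : ℝ)^2 := by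
    rw [detOmat]
    have hcast : ((Pe a b c d e f g h : ℤ) : ℂ) + ((Qe a b c d e f g h : ℤ) : ℂ) * Complex.I
        = ((Pe a b c d e f g h : ℝ) : ℂ) + ((Qe a b c d e f g h : ℝ) : ℂ) * Complex.I := by
      push_cast; ring
    rw [hcast, Complex.normSq_add_mul_I]
  have h1ns : (1:ℝ) ≤ Complex.normSq ((Omat a b c d e f g h).det) := by
    rw [hns]; exact_mod_cast hge
  have habs : 1 ≤ ‖(Omat a b c d e f g h).det‖ := by
    rw [Complex.norm_def]
    calc (1:ℝ) = Real.sqrt 1 := Real.sqrt_one.symm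
      _ ≤ Real.sqrt (Complex.normSq ((Omat a b c d e f g h).det)) := Real.sqrt_le_sqrt h1ns
  refine ⟨habs, ?_⟩
  have := fro_ge (Omat a b c d e f g h)
  linarith
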